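/- Let A : H →ᵐ H and B : G →ᵐ G be maximal monotone operators on real Hilbert spaces and G₀ : H → G a bounded linear operator. Suppose (r^k, a^k) ∈ Graph A^[ε_a^k] and (s^k, b^k) ∈ Graph B^[ε_b^k] with r^k ⇀ r̄ weakly in H, b^k ⇀ b̄ weakly in G, ε_a^k → 0, ε_b^k → 0, G₀ r^k - s^k → 0 strongly, and a^k + G₀* b^k → 0 strongly. Then -G₀* b̄ ∈ A(r̄) and b̄ ∈ B(G₀ r̄). -/

import Mathlib

open Filter InnerProductSpace

/-- The ε-enlargement of a set-valued map `T` on a real Hilbert space: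
`u ∈ enl T ε x` iff `⟪x - y, u - v⟫ ≥ -ε` for all `(y, v)` in the graph of `T`. -/
def enl {H : Type*} [NormedAddCommGroup H] [InnerProductSpace ℝ H]
    (T : H → Set H) (ε : ℝ) (x : H) : Set H :=
  {u | ∀ y v, v ∈ T y → -ε ≤ ⟪x - y, u - v⟫_ℝ}

/-- A set-valued map is monotone. -/
def MonotoneOp {H : Type*} [NormedAddCommGroup H] [InnerProductSpace ℝ H]
    (T : H → Set H) : Prop :=
  ∀ x y u v, u ∈ T x → v ∈ T y → 0 ≤ ⟪x - y, u - v⟫_ℝ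

/-- A set-valued map is maximal monotone: it is monotone and its graph is not properly
contained in the graph of any monotone operator. -/
def MaxMonotoneOp {H : Type*} [NormedAddCommGroup H] [InnerProductSpace ℝ H]
    (T : H → Set H) : Prop :=
  MonotoneOp T ∧ ∀ S : H → Set H, MonotoneOp S → (∀ x, T x ⊆ S x) → ∀ x, S x = T x

/-- If `u` is monotonically related to the graph of a maximal monotone `T`, then `u ∈ T x`. -/
lemma maxmon_mem {H : Type*} [NormedAddCommGroup H] [InnerProductSpace ℝ H]
    {T : H → Set H} (hT : MaxMonotoneOp T) {x : H} {u : H}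
    (h : ∀ y v, v ∈ T y → 0 ≤ ⟪x - y, u - v⟫_ℝ) : u ∈ T x := by
  set S : H → Set H := fun y => T y ∪ {z | y = x ∧ z = u} with hS
  have hmono : MonotoneOp S := by
    rintro x' y' u' v' (hu | ⟨h1, h2⟩) (hv | ⟨h3, h4⟩)
    · exact hT.1 x' y' u' v' hu hv
    · subst h3; subst h4
      have := h x' u' hu
      rwa [← neg_sub y' x', ← neg_sub v' u', inner_neg_neg]
    · subst h1; subst h2
      exact h y' v' hv
    · subst h1; subst h2; subst h3
      simp [h4]
  have := hT.2 S hmono (fun y => Set.subset_union_left) x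
  rw [← this]; exact Or.inr ⟨rfl, rfl⟩

/-- A maximal monotone operator has nonempty graph. -/
lemma maxmon_graph_nonempty {H : Type*} [NormedAddCommGroup H] [InnerProductSpace ℝ H]
    {T : H → Set H} (hT : MaxMonotoneOp T) : ∃ y v, v ∈ T y := by
  by_contra hc
  push_neg at hc
  have hmono : MonotoneOp (fun _ : H => ({0} : Set H)) := by
    intro x y u v hu hv
    simp only [Set.mem_singleton_iff] at hu hv
    simp [hu, hv]
  have := hT.2 _ hmono (fun x z hz => absurd hz (hc x z)) 0
  exact hc 0 0 (this ▸ rfl)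

/-- Weakly convergent sequences are norm bounded (Banach–Steinhaus). -/
lemma weak_bounded {H : Type*} [NormedAddCommGroup H] [InnerProductSpace ℝ H]
    [CompleteSpace H] (r : ℕ → H) (rbar : H)
    (h : ∀ w : H, Tendsto (fun k => ⟪r k, w⟫_ℝ) atTop (nhds ⟪rbar, w⟫_ℝ)) :
    ∃ C : ℝ, ∀ k, ‖r k‖ ≤ C := by
  have hpt : ∀ w : H, ∃ C, ∀ k, ‖(innerSL ℝ (r k)) w‖ ≤ C := by
    intro w
    obtain ⟨C, hC⟩ := ((h w).norm).bddAbove_range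
    exact ⟨C, fun k => hC ⟨k, rfl⟩⟩
  obtain ⟨C', hC'⟩ := banach_steinhaus hpt
  exact ⟨C', fun k => by simpa [innerSL_apply_norm] using hC' k⟩

/-- Inner product of a bounded sequence with a null sequence tends to zero. -/
lemma inner_bdd_null {H : Type*} [NormedAddCommGroup H] [InnerProductSpace ℝ H]
    (f g : ℕ → H) (C : ℝ) (hf : ∀ k, ‖f k‖ ≤ C)
    (hg : Tendsto g atTop (nhds 0)) :
    Tendsto (fun k => ⟪f k, g k⟫_ℝ) atTop (nhds 0) := by
  have hb : ∀ k, ‖⟪f k, g k⟫_ℝ‖ ≤ C * ‖g k‖ := by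
    intro k
    calc ‖⟪f k, g k⟫_ℝ‖ ≤ ‖f k‖ * ‖g k‖ := norm_inner_le_norm _ _
      _ ≤ C * ‖g k‖ := mul_le_mul_of_nonneg_right (hf k) (norm_nonneg _)
  exact squeeze_zero_norm hb (by simpa using (hg.norm).const_mul C)

theorem composed_graph_limit {H G : Type*} [NormedAddCommGroup H] [InnerProductSpace ℝ H]
    [NormedAddCommGroup G] [InnerProductSpace ℝ G] [CompleteSpace H] [CompleteSpace G]
    (A : H → Set H) (B : G → Set G) (hA : MaxMonotoneOp A) (hB : MaxMonotoneOp B)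
    (G₀ : H →L[ℝ] G)
    (r a : ℕ → H) (s b : ℕ → G) (εa εb : ℕ → ℝ) (rbar : H) (bbar : G)
    (hmemA : ∀ k, a k ∈ enl A (εa k) (r k))
    (hmemB : ∀ k, b k ∈ enl B (εb k) (s k))
    (hrweak : ∀ w : H, Tendsto (fun k => ⟪r k, w⟫_ℝ) atTop (nhds ⟪rbar, w⟫_ℝ))
    (hbweak : ∀ w : G, Tendsto (fun k => ⟪b k, w⟫_ℝ) atTop (nhds ⟪bbar, w⟫_ℝ))
    (hεa : Tendsto εa atTop (nhds 0)) (hεb : Tendsto εb atTop (nhds 0))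
    (hGs : Tendsto (fun k => G₀ (r k) - s k) atTop (nhds 0))
    (haG : Tendsto (fun k => a k + (ContinuousLinearMap.adjoint G₀) (b k)) atTop (nhds 0)) :
    -(ContinuousLinearMap.adjoint G₀) bbar ∈ A rbar ∧ bbar ∈ B (G₀ rbar) := by
  set G₀s := ContinuousLinearMap.adjoint G₀ with hG₀s
  set u₁ : H := -G₀s bbar with hu₁
  obtain ⟨Cr, hCr⟩ := weak_bounded r rbar hrweak
  obtain ⟨Cb, hCb⟩ := weak_bounded b bbar hbweak
  -- key inequality
  have key : ∀ y v, v ∈ A y → ∀ z w, w ∈ B z →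
      0 ≤ ⟪rbar - y, u₁ - v⟫_ℝ + ⟪G₀ rbar - z, bbar - w⟫_ℝ := by
    intro y v hv z w hw
    set E : ℕ → ℝ := fun k => ⟪r k - y, a k - v⟫_ℝ + ⟪s k - z, b k - w⟫_ℝ with hE
    have hlow : ∀ k, -(εa k + εb k) ≤ E k := by
      intro k
      have h1 := hmemA k y v hv
      have h2 := hmemB k z w hw
      simp only [neg_add]
      exact add_le_add h1 h2
    -- decompose E
    have hdecomp : ∀ k, E k =
        ⟪r k - y, a k + G₀s (b k)⟫_ℝ + ⟪s k - G₀ (r k), b k - w⟫_ℝ +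
        ((⟪y, v⟫_ℝ - ⟪r k, v⟫_ℝ) + ⟪b k, G₀ y - z⟫_ℝ - ⟪r k, G₀s w⟫_ℝ + ⟪z, w⟫_ℝ) := by
      intro k
      simp only [hE, hG₀s, inner_sub_left, inner_sub_right, inner_add_right,
        ContinuousLinearMap.adjoint_inner_right, map_sub]
      rw [real_inner_comm (b k) (G₀ y), real_inner_comm (b k) z]
      ring
    have ht1 : Tendsto (fun k => ⟪r k - y, a k + G₀s (b k)⟫_ℝ) atTop (nhds 0) := by
      refine inner_bdd_null _ _ (Cr + ‖y‖) (fun k => ?_) haG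
      calc ‖r k - y‖ ≤ ‖r k‖ + ‖y‖ := norm_sub_le _ _
        _ ≤ Cr + ‖y‖ := add_le_add (hCr k) le_rfl
    have ht2 : Tendsto (fun k => ⟪s k - G₀ (r k), b k - w⟫_ℝ) atTop (nhds 0) := by
      have : Tendsto (fun k => ⟪b k - w, s k - G₀ (r k)⟫_ℝ) atTop (nhds 0) := by
        refine inner_bdd_null _ _ (Cb + ‖w‖) (fun k => ?_) ?_
        · calc ‖b k - w‖ ≤ ‖b k‖ + ‖w‖ := norm_sub_le _ _
            _ ≤ Cb + ‖w‖ := add_le_add (hCb k) le_rfl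
        · have := hGs.neg
          simpa [neg_sub] using this
      simpa [real_inner_comm] using this
    have ht3 : Tendsto (fun k =>
        (⟪y, v⟫_ℝ - ⟪r k, v⟫_ℝ) + ⟪b k, G₀ y - z⟫_ℝ - ⟪r k, G₀s w⟫_ℝ + ⟪z, w⟫_ℝ)
        atTop (nhds ((⟪y, v⟫_ℝ - ⟪rbar, v⟫_ℝ) + ⟪bbar, G₀ y - z⟫_ℝ - ⟪rbar, G₀s w⟫_ℝ + ⟪z, w⟫_ℝ)) := by
      exact (((tendsto_const_nhds.sub (hrweak v)).add (hbweak (G₀ y - z))).sub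
        (hrweak (G₀s w))).add tendsto_const_nhds
    have hElim : Tendsto E atTop (nhds
        ((⟪y, v⟫_ℝ - ⟪rbar, v⟫_ℝ) + ⟪bbar, G₀ y - z⟫_ℝ - ⟪rbar, G₀s w⟫_ℝ + ⟪z, w⟫_ℝ)) := by
      have := (ht1.add ht2).add ht3
      rw [show (0:ℝ) + 0 = 0 by ring, zero_add] at this
      exact this.congr (fun k => (hdecomp k).symm)
    have hlim0 : Tendsto (fun k => -(εa k + εb k)) atTop (nhds 0) := by
      simpa using (hεa.add hεb).neg
    have h0le := le_of_tendsto_of_tendsto' hlim0 hElim hlow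
    have heq : (⟪y, v⟫_ℝ - ⟪rbar, v⟫_ℝ) + ⟪bbar, G₀ y - z⟫_ℝ - ⟪rbar, G₀s w⟫_ℝ + ⟪z, w⟫_ℝ
        = ⟪rbar - y, u₁ - v⟫_ℝ + ⟪G₀ rbar - z, bbar - w⟫_ℝ := by
      simp only [hu₁, hG₀s, inner_sub_left, inner_sub_right, inner_neg_right,
        ContinuousLinearMap.adjoint_inner_right, map_sub]
      rw [real_inner_comm bbar (G₀ y), real_inner_comm bbar z]
      ring
    rwa [heq] at h0le
  -- conclude
  have hbB : bbar ∈ B (G₀ rbar) := by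
    by_contra hb
    have : ¬ (∀ z w, w ∈ B z → 0 ≤ ⟪G₀ rbar - z, bbar - w⟫_ℝ) :=
      fun h => hb (maxmon_mem hB h)
    push_neg at this
    obtain ⟨z, w, hw, hneg⟩ := this
    have hu₁A : u₁ ∈ A rbar := by
      refine maxmon_mem hA (fun y v hv => ?_)
      have := key y v hv z w hw
      linarith
    have := key rbar u₁ hu₁A z w hw
    simp only [sub_self, inner_zero_left] at this
    linarith
  refine ⟨?_, hbB⟩
  refine maxmon_mem hA (fun y v hv => ?_)
  have := key y v hv (G₀ rbar) bbar hbB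
  simp only [sub_self, inner_zero_left] at this
  linarith
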